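/- The matrix A_n + (n(n-1)(2n-1)/6)·I_n is completely positive, i.e., it can be written as BBᵀ for some entrywise nonnegative matrix B. -/
import Mathlib

open Matrix Finset

lemma sumsq (n : ℕ) :
    ∑ k ∈ Finset.range n, (k : ℝ) ^ 2
      = (n : ℝ) * ((n : ℝ) - 1) * (2 * (n : ℝ) - 1) / 6 := by
  induction n with
  | zero => simp
  | succ m ih =>
    rw [Finset.sum_range_succ, ih]
    push_cast
    ring

lemma dom (n i : ℕ) (hi : i < n) :
    ∑ j ∈ Finset.range n, ((j : ℝ) - (i : ℝ)) ^ 2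
      ≤ ∑ k ∈ Finset.range n, (k : ℝ) ^ 2 := by
  induction n with
  | zero => omega
  | succ m ih =>
    rcases Nat.lt_succ_iff_lt_or_eq.mp hi with h | h
    · rw [Finset.sum_range_succ, Finset.sum_range_succ]
      have h1 := ih h
      have h0 : (0 : ℝ) ≤ (i : ℝ) := by positivity
      have him : (i : ℝ) ≤ (m : ℝ) := by exact_mod_cast h.le
      nlinarith [h1]
    · subst h
      have key : ∀ j ∈ Finset.range (i + 1),
          ((j : ℝ) - (i : ℝ)) ^ 2 = (((i - j : ℕ)) : ℝ) ^ 2 := by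
        intro j hj
        have hji : j ≤ i := Nat.lt_succ_iff.mp (Finset.mem_range.mp hj)
        have : ((i - j : ℕ) : ℝ) = (i : ℝ) - (j : ℝ) := by
          push_cast [hji]; ring
        rw [this]; ring
      rw [Finset.sum_congr rfl key]
      have := Finset.sum_range_reflect (fun k : ℕ => ((k : ℕ) : ℝ) ^ 2) (i + 1)
      simp only [Nat.add_sub_cancel] at this
      exact le_of_eq this

theorem stmt_10 (n : ℕ) (hn : 1 ≤ n)
    (A : Matrix (Fin n) (Fin n) ℝ)
    (hA : ∀ i j : Fin n, A i j = ((j.val : ℝ) - (i.val : ℝ)) ^ 2)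
    (c : ℝ) (hc : c = (n : ℝ) * ((n : ℝ) - 1) * (2 * (n : ℝ) - 1) / 6) :
    ∃ (k : ℕ) (B : Matrix (Fin n) (Fin k) ℝ),
      (∀ (i : Fin n) (j : Fin k), 0 ≤ B i j) ∧
      A + c • (1 : Matrix (Fin n) (Fin n) ℝ) = B * Bᵀ := by
  classical
  set f : Fin n → Fin n → ℝ := fun i j => (((j : ℕ) : ℝ) - ((i : ℕ) : ℝ)) ^ 2 with hfdef
  have hf0 : ∀ i j, 0 ≤ f i j := fun i j => by positivity
  have hfsymm : ∀ i j, f i j = f j i := fun i j => by simp only [hfdef]; ring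
  have hfdiag : ∀ i, f i i = 0 := fun i => by simp [hfdef]
  set d : Fin n → ℝ := fun p => c - ∑ q : Fin n, f p q with hddef
  have hd0 : ∀ p, 0 ≤ d p := by
    intro p
    have h1 : ∑ q : Fin n, f p q
        = ∑ j ∈ Finset.range n, ((j : ℝ) - ((p : ℕ) : ℝ)) ^ 2 :=
      Fin.sum_univ_eq_sum_range (fun j => ((j : ℝ) - ((p : ℕ) : ℝ)) ^ 2) n
    have h2 := dom n p p.isLt
    have h3 := sumsq n
    simp only [hddef, h1, hc]
    linarith
  set B0 : Matrix (Fin n) ((Fin n × Fin n) ⊕ Fin n) ℝ :=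
    fun i x => Sum.casesOn x
      (fun pq => if i = pq.1 ∨ i = pq.2 then Real.sqrt (f pq.1 pq.2 / 2) else 0)
      (fun p => if i = p then Real.sqrt (d p) else 0) with hB0def
  have hB0nn : ∀ (i : Fin n) (x : (Fin n × Fin n) ⊕ Fin n), 0 ≤ B0 i x := by
    intro i x
    rcases x with pq | p
    · show (0 : ℝ) ≤ if i = pq.1 ∨ i = pq.2 then Real.sqrt (f pq.1 pq.2 / 2) else 0
      split_ifs
      · exact Real.sqrt_nonneg _
      · exact le_refl 0
    · show (0 : ℝ) ≤ if i = p then Real.sqrt (d p) else 0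
      split_ifs
      · exact Real.sqrt_nonneg _
      · exact le_refl 0
  set e : ((Fin n × Fin n) ⊕ Fin n) ≃ Fin (n * n + n) :=
    (Equiv.sumCongr (finProdFinEquiv) (Equiv.refl (Fin n))).trans finSumFinEquiv with hedef
  refine ⟨n * n + n, Matrix.of (fun i m => B0 i (e.symm m)), ?_, ?_⟩
  · intro i m
    exact hB0nn i (e.symm m)
  · ext i j
    have hRHS : (Matrix.of (fun i m => B0 i (e.symm m)) *
          (Matrix.of (fun i m => B0 i (e.symm m)))ᵀ) i j
        = ∑ x : (Fin n × Fin n) ⊕ Fin n, B0 i x * B0 j x := by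
      simp only [Matrix.mul_apply, Matrix.transpose_apply, Matrix.of_apply]
      exact Equiv.sum_comp e.symm (fun x => B0 i x * B0 j x)
    rw [hRHS, Fintype.sum_sum_type]
    simp only [Fintype.sum_prod_type]
    have hterm : ∀ p q : Fin n,
        B0 i (Sum.inl (p, q)) * B0 j (Sum.inl (p, q))
          = if (i = p ∨ i = q) ∧ (j = p ∨ j = q) then f p q / 2 else 0 := by
      intro p q
      have hnn : (0 : ℝ) ≤ f p q / 2 := by have := hf0 p q; linarith
      show (if i = p ∨ i = q then Real.sqrt (f p q / 2) else 0) *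
            (if j = p ∨ j = q then Real.sqrt (f p q / 2) else 0) = _
      by_cases h1 : i = p ∨ i = q
      · by_cases h2 : j = p ∨ j = q
        · rw [if_pos h1, if_pos h2, if_pos ⟨h1, h2⟩]
          exact Real.mul_self_sqrt hnn
        · rw [if_neg h2, mul_zero, if_neg (fun h => h2 h.2)]
      · rw [if_neg h1, zero_mul, if_neg (fun h => h1 h.1)]
    have hLHS : (A + c • (1 : Matrix (Fin n) (Fin n) ℝ)) i j
        = f i j + (if i = j then c else 0) := by
      rw [Matrix.add_apply, Matrix.smul_apply, Matrix.one_apply, hA i j]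
      simp only [smul_eq_mul, mul_ite, mul_one, mul_zero, hfdef]
    rw [hLHS]
    by_cases hij : i = j
    · -- diagonal case: replace j by i
      rw [← hij] at hterm
      rw [← hij]
      rw [if_pos rfl, hfdiag i, zero_add]
      have hterm2 : ∀ p q : Fin n,
          B0 i (Sum.inl (p, q)) * B0 i (Sum.inl (p, q))
            = (if p = i then f p q / 2 else 0) + (if q = i then f p q / 2 else 0) := by
        intro p q
        rw [hterm p q]
        have hC : ((i = p ∨ i = q) ∧ (i = p ∨ i = q)) ↔ (i = p ∨ i = q) := and_self_iff
        rw [if_congr hC rfl rfl]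
        by_cases hp : p = i <;> by_cases hq : q = i
        · rw [if_pos (Or.inl hp.symm), if_pos hp, if_pos hq]
          have : f p q = 0 := by rw [hp, hq]; exact hfdiag i
          rw [this]; norm_num
        · rw [if_pos (Or.inl hp.symm), if_pos hp, if_neg hq, add_zero]
        · rw [if_pos (Or.inr hq.symm), if_neg hp, if_pos hq, zero_add]
        · rw [if_neg (by tauto), if_neg hp, if_neg hq, add_zero]
      have hpair : ∑ p : Fin n, ∑ q : Fin n,
            B0 i (Sum.inl (p, q)) * B0 i (Sum.inl (p, q)) = ∑ q : Fin n, f i q := by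
        simp only [hterm2, Finset.sum_add_distrib]
        have e1 : ∑ p : Fin n, ∑ q : Fin n, (if p = i then f p q / 2 else 0)
            = ∑ q : Fin n, f i q / 2 := by
          have hinner : ∀ p : Fin n, (∑ q : Fin n, if p = i then f p q / 2 else 0)
              = if p = i then ∑ q : Fin n, f p q / 2 else 0 := by
            intro p; split_ifs <;> simp
          rw [Finset.sum_congr rfl (fun p _ => hinner p)]
          rw [Finset.sum_ite_eq' Finset.univ i (fun p => ∑ q : Fin n, f p q / 2)]
          simp
        have e2 : ∑ p : Fin n, ∑ q : Fin n, (if q = i then f p q / 2 else 0)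
            = ∑ p : Fin n, f p i / 2 := by
          refine Finset.sum_congr rfl (fun p _ => ?_)
          rw [Finset.sum_ite_eq' Finset.univ i (fun q => f p q / 2)]
          simp
        rw [e1, e2]
        have e3 : ∑ p : Fin n, f p i / 2 = ∑ p : Fin n, f i p / 2 :=
          Finset.sum_congr rfl (fun p _ => by rw [hfsymm])
        rw [e3, ← Finset.sum_add_distrib]
        exact Finset.sum_congr rfl (fun q _ => by ring)
      have hdiagpart : ∑ p : Fin n,
          B0 i (Sum.inr p) * B0 i (Sum.inr p) = d i := by
        have hterm3 : ∀ p : Fin n, B0 i (Sum.inr p) * B0 i (Sum.inr p)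
            = if p = i then d p else 0 := by
          intro p
          show (if i = p then Real.sqrt (d p) else 0) *
                (if i = p then Real.sqrt (d p) else 0) = _
          by_cases h : i = p
          · rw [if_pos h, if_pos h.symm]
            exact Real.mul_self_sqrt (hd0 p)
          · rw [if_neg h, mul_zero, if_neg (fun h' => h h'.symm)]
        rw [Finset.sum_congr rfl (fun p _ => hterm3 p)]
        rw [Finset.sum_ite_eq' Finset.univ i (fun p => d p)]
        simp
      rw [hpair, hdiagpart]
      simp only [hddef]
      ring
    · -- off-diagonal case
      rw [if_neg hij, add_zero]
      have hterm2 : ∀ p q : Fin n,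
          B0 i (Sum.inl (p, q)) * B0 j (Sum.inl (p, q))
            = (if p = i ∧ q = j then f p q / 2 else 0)
              + (if p = j ∧ q = i then f p q / 2 else 0) := by
        intro p q
        rw [hterm p q]
        have hCiff : ((i = p ∨ i = q) ∧ (j = p ∨ j = q))
            ↔ ((p = i ∧ q = j) ∨ (p = j ∧ q = i)) := by
          constructor
          · rintro ⟨hi1 | hi1, hj1 | hj1⟩
            · exact absurd (hi1.trans hj1.symm) hij
            · exact Or.inl ⟨hi1.symm, hj1.symm⟩
            · exact Or.inr ⟨hj1.symm, hi1.symm⟩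
            · exact absurd (hi1.trans hj1.symm) hij
          · rintro (⟨h1, h2⟩ | ⟨h1, h2⟩)
            · exact ⟨Or.inl h1.symm, Or.inr h2.symm⟩
            · exact ⟨Or.inr h2.symm, Or.inl h1.symm⟩
        rw [if_congr hCiff rfl rfl]
        by_cases hD1 : p = i ∧ q = j <;> by_cases hD2 : p = j ∧ q = i
        · exact absurd (hD1.1.symm.trans hD2.1) hij
        · rw [if_pos (Or.inl hD1), if_pos hD1, if_neg hD2, add_zero]
        · rw [if_pos (Or.inr hD2), if_neg hD1, if_pos hD2, zero_add]
        · rw [if_neg (by tauto), if_neg hD1, if_neg hD2, add_zero]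
      have hpair : ∑ p : Fin n, ∑ q : Fin n,
            B0 i (Sum.inl (p, q)) * B0 j (Sum.inl (p, q)) = f i j := by
        simp only [hterm2, Finset.sum_add_distrib]
        have e1 : ∑ p : Fin n, ∑ q : Fin n, (if p = i ∧ q = j then f p q / 2 else 0)
            = f i j / 2 := by
          simp only [ite_and]
          have hinner : ∀ p : Fin n,
              (∑ q : Fin n, if p = i then (if q = j then f p q / 2 else 0) else 0)
                = if p = i then f p j / 2 else 0 := by
            intro p
            split_ifs with h
            · rw [Finset.sum_ite_eq' Finset.univ j (fun q => f p q / 2)]; simp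
            · simp
          rw [Finset.sum_congr rfl (fun p _ => hinner p)]
          rw [Finset.sum_ite_eq' Finset.univ i (fun p => f p j / 2)]
          simp
        have e2 : ∑ p : Fin n, ∑ q : Fin n, (if p = j ∧ q = i then f p q / 2 else 0)
            = f j i / 2 := by
          simp only [ite_and]
          have hinner : ∀ p : Fin n,
              (∑ q : Fin n, if p = j then (if q = i then f p q / 2 else 0) else 0)
                = if p = j then f p i / 2 else 0 := by
            intro p
            split_ifs with h
            · rw [Finset.sum_ite_eq' Finset.univ i (fun q => f p q / 2)]; simp
            · simp
          rw [Finset.sum_congr rfl (fun p _ => hinner p)]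
          rw [Finset.sum_ite_eq' Finset.univ j (fun p => f p i / 2)]
          simp
        rw [e1, e2, hfsymm j i]
        ring
      have hdiagpart : ∑ p : Fin n,
          B0 i (Sum.inr p) * B0 j (Sum.inr p) = 0 := by
        apply Finset.sum_eq_zero
        intro p _
        show (if i = p then Real.sqrt (d p) else 0) *
              (if j = p then Real.sqrt (d p) else 0) = 0
        by_cases h : i = p
        · have hjp : ¬ j = p := fun h' => hij (h.trans h'.symm)
          rw [if_neg hjp, mul_zero]
        · rw [if_neg h, zero_mul]
      rw [hpair, hdiagpart, add_zero]
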